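/- Suppose E and F are n-dimensional normed spaces, T : AC(X,E) → AC(Y,F) is a separating linear bijection with support map h, and f ∈ AC(X,E) satisfies f(h(y₀)) = 0 for some y₀ ∈ Y. Then there exists y₁ ∈ h⁻¹(h(y₀)) such that the vectors T(ê₁)(y₁), ..., T(êₙ)(y₁) form a basis of F, where {e₁,...,eₙ} is a basis of E and êᵢ denotes the constant function with value eᵢ. -/

import Mathlib

open Set

def AbsCont {E : Type*} [NormedAddCommGroup E] {X : Set ℝ} (f : X → E) : Prop :=
  ∀ ε > (0 : ℝ), ∃ δ > (0 : ℝ), ∀ n : ℕ, ∀ a b : Fin n → X,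
    (∀ i, (a i : ℝ) < b i) →
    (∀ i j, i ≠ j → Disjoint (Set.Ioo (a i : ℝ) (b i)) (Set.Ioo (a j : ℝ) (b j))) →
    (∑ i, ((b i : ℝ) - a i)) < δ →
    (∑ i, ‖f (b i) - f (a i)‖) < ε

/-- `T` is separating on absolutely continuous functions: disjoint cozero sets are
mapped to disjoint cozero sets. -/
def Separating {E F : Type*} [NormedAddCommGroup E] [NormedAddCommGroup F]
    {X Y : Set ℝ} (T : (X → E) → (Y → F)) : Prop :=
  ∀ f g : X → E, AbsCont f → AbsCont g → (∀ x, f x = 0 ∨ g x = 0) →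
    ∀ y, T f y = 0 ∨ T g y = 0

/-- `x ∈ supp(δ_y ∘ T)`: every open neighborhood `U` of `x` admits an absolutely
continuous `f` with cozero set contained in `U` and `T f y ≠ 0`. -/
def InSupp {E F : Type*} [NormedAddCommGroup E] [NormedAddCommGroup F]
    {X Y : Set ℝ} (T : (X → E) → (Y → F)) (y : Y) (x : X) : Prop :=
  ∀ U : Set X, IsOpen U → x ∈ U →
    ∃ f : X → E, AbsCont f ∧ (∀ z, f z ≠ 0 → z ∈ U) ∧ T f y ≠ 0


lemma absCont_const {E : Type*} [NormedAddCommGroup E] {X : Set ℝ} (c : E) :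
    AbsCont (fun _ : X => c) := by
  intro ε hε
  exact ⟨1, one_pos, fun n a b _ _ _ => by simpa using hε⟩

lemma absCont_sub {E : Type*} [NormedAddCommGroup E] {X : Set ℝ} {f g : X → E}
    (hf : AbsCont f) (hg : AbsCont g) : AbsCont (fun z => f z - g z) := by
  intro ε hε
  obtain ⟨δ₁, hδ₁, H₁⟩ := hf (ε / 2) (by linarith)
  obtain ⟨δ₂, hδ₂, H₂⟩ := hg (ε / 2) (by linarith)
  refine ⟨min δ₁ δ₂, lt_min hδ₁ hδ₂, fun n a b hab hdisj hsum => ?_⟩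
  have h1 := H₁ n a b hab hdisj (hsum.trans_le (min_le_left _ _))
  have h2 := H₂ n a b hab hdisj (hsum.trans_le (min_le_right _ _))
  calc ∑ i, ‖(f (b i) - g (b i)) - (f (a i) - g (a i))‖
      ≤ ∑ i, (‖f (b i) - f (a i)‖ + ‖g (b i) - g (a i)‖) := by
        refine Finset.sum_le_sum fun i _ => ?_
        have he : f (b i) - g (b i) - (f (a i) - g (a i))
            = (f (b i) - f (a i)) - (g (b i) - g (a i)) := by abel
        rw [he]; exact norm_sub_le _ _
    _ = (∑ i, ‖f (b i) - f (a i)‖) + ∑ i, ‖g (b i) - g (a i)‖ := Finset.sum_add_distrib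
    _ < ε / 2 + ε / 2 := add_lt_add h1 h2
    _ = ε := by ring

/-- Lemma 3.1: if `f (h y₀) = 0`, there is `y₁ ∈ h⁻¹(h y₀)` where the images of the
constant basis functions form a basis of `F`. -/
theorem exists_point_basis {𝕜 : Type*} [RCLike 𝕜]
    {E F : Type*} [NormedAddCommGroup E] [NormedSpace 𝕜 E]
    [NormedAddCommGroup F] [NormedSpace 𝕜 F]
    {n : ℕ} [FiniteDimensional 𝕜 E] [FiniteDimensional 𝕜 F]
    (hdimE : Module.finrank 𝕜 E = n) (hdimF : Module.finrank 𝕜 F = n)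
    (b : Module.Basis (Fin n) 𝕜 E)
    {X Y : Set ℝ} (hX : IsCompact X) (hY : IsCompact Y)
    (T : (X → E) → (Y → F))
    (hadd : ∀ f g : X → E, T (f + g) = T f + T g)
    (hsmul : ∀ (c : 𝕜) (f : X → E), T (c • f) = c • T f)
    (hmaps : ∀ f : X → E, AbsCont f → AbsCont (T f))
    (hinj : ∀ f g : X → E, AbsCont f → AbsCont g → T f = T g → f = g)
    (hsurj : ∀ g : Y → F, AbsCont g → ∃ f : X → E, AbsCont f ∧ T f = g)
    (hsep : Separating T)
    (h : Y → X) (hsupp : ∀ (y : Y) (x : X), InSupp T y x ↔ x = h y)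
    (hprop : ∀ (f : X → E) (y₀ : Y), AbsCont f → f (h y₀) = 0 →
      (frontier {y : Y | h y = h y₀} = ∅ → ∀ y : Y, h y = h y₀ → T f y = 0) ∧
      (frontier {y : Y | h y = h y₀} ≠ ∅ →
        ∀ y ∈ frontier {y : Y | h y = h y₀}, T f y = 0))
    (f : X → E) (y₀ : Y) (hf : AbsCont f) (hf0 : f (h y₀) = 0) :
    ∃ y₁ : Y, h y₁ = h y₀ ∧
      LinearIndependent 𝕜 (fun i : Fin n => T (fun _ => b i) y₁) ∧
      Submodule.span 𝕜 (Set.range (fun i : Fin n => T (fun _ => b i) y₁)) = ⊤ := by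

  classical
  -- the key step: any `y₁` in the fiber where `T g y₁ = 0` for all AC `g`
  -- vanishing at `h y₀` works
  have key : ∀ y₁ : Y, (∀ g : X → E, AbsCont g → g (h y₀) = 0 → T g y₁ = 0) →
      LinearIndependent 𝕜 (fun i : Fin n => T (fun _ => b i) y₁) ∧
      Submodule.span 𝕜 (Set.range (fun i : Fin n => T (fun _ => b i) y₁)) = ⊤ := by
    intro y₁ hvan
    set S : E →ₗ[𝕜] F :=
      { toFun := fun v => T (fun _ => v) y₁
        map_add' := by
          intro u v
          show T (fun _ : X => u + v) y₁ = T (fun _ => u) y₁ + T (fun _ => v) y₁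
          have he : (fun _ : X => u + v) = (fun _ : X => u) + fun _ : X => v := rfl
          rw [he, hadd]; rfl
        map_smul' := by
          intro c v
          show T (fun _ : X => c • v) y₁ = c • T (fun _ => v) y₁
          have he : (fun _ : X => c • v) = c • fun _ : X => v := rfl
          rw [he, hsmul]; rfl } with hS
    have hSsurj : Function.Surjective S := by
      intro w
      obtain ⟨f', hf'AC, hTf'⟩ := hsurj (fun _ => w) (absCont_const w)
      refine ⟨f' (h y₀), ?_⟩
      have hgAC : AbsCont (fun z => f' z - f' (h y₀)) :=
        absCont_sub hf'AC (absCont_const _)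
      have hg0 : (fun z => f' z - f' (h y₀)) (h y₀) = 0 := sub_self _
      have hv := hvan _ hgAC hg0
      have hsplit : f' = (fun z => f' z - f' (h y₀)) + fun _ => f' (h y₀) := by
        funext z; simp
      have : T f' y₁ = T (fun z => f' z - f' (h y₀)) y₁ + T (fun _ => f' (h y₀)) y₁ := by
        conv_lhs => rw [hsplit, hadd]
        rfl
      have hw : T f' y₁ = w := by rw [hTf']
      simp only [hS, LinearMap.coe_mk, AddHom.coe_mk]
      rw [← hw, this, hv, zero_add]
    have hSinj : Function.Injective S :=
      (LinearMap.injective_iff_surjective_of_finrank_eq_finrank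
        (by rw [hdimE, hdimF])).mpr hSsurj
    constructor
    · have := (b.linearIndependent).map' S (LinearMap.ker_eq_bot.mpr hSinj)
      exact this
    · have hrange : (Set.range fun i : Fin n => T (fun _ => b i) y₁)
          = S '' (Set.range b) := by
        rw [← Set.range_comp]; rfl
      rw [hrange, ← Submodule.map_span, b.span_eq, Submodule.map_top,
        LinearMap.range_eq_top.mpr hSsurj]
  by_cases hfr : frontier {y : Y | h y = h y₀} = ∅
  · refine ⟨y₀, rfl, key y₀ fun g hg hg0 => (hprop g y₀ hg hg0).1 hfr y₀ rfl⟩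
  · obtain ⟨y₁, hy₁⟩ := Set.nonempty_iff_ne_empty.mpr hfr
    have hy₁K : h y₁ = h y₀ := by
      by_contra hne
      obtain ⟨f', hf'AC, hcoz, hTf'⟩ := (hsupp y₁ (h y₁)).mpr rfl {h y₀}ᶜ
        isOpen_compl_singleton (by simpa using hne)
      have hf'0 : f' (h y₀) = 0 := by
        by_contra h0
        exact (hcoz _ h0) rfl
      exact hTf' ((hprop f' y₀ hf'AC hf'0).2 hfr y₁ hy₁)
    exact ⟨y₁, hy₁K, key y₁ fun g hg hg0 => (hprop g y₀ hg hg0).2 hfr y₁ hy₁⟩
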